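/- Let 0 = p_0 < p_1 ≤ ... ≤ p_Q = n, let s : {1,...,n} → ℤ be sign-constant on each interval (p_{j-1}, p_j], and suppose x ∈ {−1,1}^Q satisfies ∑_{j=1}^{Q} x_j · (∑_{i=p_{j-1}+1}^{p_j} |s_i| i^e) = 0 for all e ∈ {0,...,Q−1}. Then s_i = 0 for all i ∈ {1,...,n}. -/

import Mathlib

open Finset Polynomial

private lemma exists_interval' (P : ℕ → ℕ) (i : ℕ) :
    ∀ Q, P 0 < i → i ≤ P Q → ∃ j, j < Q ∧ P j < i ∧ i ≤ P (j + 1) := by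
  intro Q
  induction Q with
  | zero => intro h1 h2; omega
  | succ Q ih =>
    intro h1 h2
    by_cases h : P Q < i
    · exact ⟨Q, Nat.lt_succ_self _, h, h2⟩
    · obtain ⟨j, hj, h3, h4⟩ := ih h1 (by omega)
      exact ⟨j, by omega, h3, h4⟩

private lemma telescope' (X : ℕ → ℤ) (hX : ∀ k, X k = 1 ∨ X k = -1)
    (c : ℕ → ℤ) (j : ℕ)
    (hc : ∀ k, j < k → 0 < X (k - 1) * X k * c k) :
    ∀ m, j ≤ m → 0 < X j * X m * ∏ k ∈ Finset.Ico (j + 1) (m + 1), c k := by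
  refine Nat.le_induction ?_ ?_
  · simp only [Finset.Ico_self, Finset.prod_empty, mul_one]
    rcases hX j with h | h <;> rw [h] <;> norm_num
  · intro m hjm ih
    rw [Finset.prod_Ico_succ_top (by omega)]
    have h1 := hc (m + 1) (by omega)
    have h2 : m + 1 - 1 = m := by omega
    rw [h2] at h1
    have key : X j * X (m + 1) * ((∏ k ∈ Finset.Ico (j + 1) (m + 1), c k) * c (m + 1))
        = (X j * X m * ∏ k ∈ Finset.Ico (j + 1) (m + 1), c k) * (X m * X (m + 1) * c (m + 1)) := by
      rcases hX m with h | h <;> rw [h] <;> ring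
    rw [key]
    exact mul_pos ih h1

/-- If all power-sum moments up to order `Q-1` of the signed measure with weights `x_j |s_i|`
vanish, where `x ∈ {-1,1}^Q` and `s` is sign-constant on each interval `(p_{j-1}, p_j]`,
then `s` vanishes on `[1, n]`. -/
theorem vanishing_moments (Q n : ℕ) (p : Fin (Q + 1) → ℕ) (s : ℕ → ℤ) (x : Fin Q → ℤ)
    (hp0 : p 0 = 0) (hpn : p (Fin.last Q) = n) (hmono : Monotone p)
    (hsign : ∀ j : Fin Q,
      (∀ i, p j.castSucc < i → i ≤ p j.succ → 0 ≤ s i) ∨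
      (∀ i, p j.castSucc < i → i ≤ p j.succ → s i ≤ 0))
    (hx : ∀ j, x j = 1 ∨ x j = -1)
    (hmom : ∀ e : Fin Q,
      ∑ j : Fin Q, x j * ∑ i ∈ Finset.Ioc (p j.castSucc) (p j.succ),
        |s i| * (i : ℤ) ^ (e : ℕ) = 0) :
    ∀ i, 1 ≤ i → i ≤ n → s i = 0 := by
  intro i0 hi1 hin
  rcases Nat.eq_zero_or_pos Q with hQ | hQpos
  · subst hQ
    have : n = 0 := by rw [← hpn]; exact (by rw [show Fin.last 0 = 0 from rfl, hp0])
    omega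
  -- ℕ-indexed versions of p and x
  set P : ℕ → ℕ := fun k => p ⟨min k Q, Nat.lt_succ_of_le (min_le_right _ _)⟩ with hP
  set X : ℕ → ℤ := fun k => if h : k < Q then x ⟨k, h⟩ else 1 with hX
  have hXpm : ∀ k, X k = 1 ∨ X k = -1 := by
    intro k
    simp only [hX]
    split
    · exact hx _
    · left; rfl
  have hPmono : Monotone P := by
    intro a b hab
    exact hmono (by simp [Fin.le_def]; omega)
  have hPcast : ∀ j : Fin Q, p j.castSucc = P j.val := by
    intro j
    simp only [hP]
    congr 1
    exact Fin.ext (by have := j.isLt; simp only [Fin.coe_castSucc]; omega)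
  have hPsucc : ∀ j : Fin Q, p j.succ = P (j.val + 1) := by
    intro j
    simp only [hP]
    congr 1
    exact Fin.ext (by have := j.isLt; simp only [Fin.val_succ]; omega)
  have hXval : ∀ j : Fin Q, x j = X j.val := by
    intro j
    simp only [hX, dif_pos j.isLt]
  have hP0 : P 0 = 0 := by
    simp only [hP]
    rw [show (⟨min 0 Q, _⟩ : Fin (Q+1)) = 0 from Fin.ext (by simp)]
    exact hp0
  have hPQ : P Q = n := by
    simp only [hP]
    rw [show (⟨min Q Q, _⟩ : Fin (Q+1)) = Fin.last Q from Fin.ext (by simp)]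
    exact hpn
  -- the polynomial
  set Gp : Polynomial ℤ := Polynomial.C (X (Q - 1)) *
      ∏ k ∈ Finset.Ico 1 Q, (if X (k - 1) = X k then 1 else
        Polynomial.C 2 * Polynomial.X - Polynomial.C (2 * (P k : ℤ) + 1)) with hGp
  -- evaluation formula
  have hEval : ∀ t : ℤ, Gp.eval t = X (Q - 1) *
      ∏ k ∈ Finset.Ico 1 Q, (if X (k - 1) = X k then 1 else 2 * t - (2 * (P k : ℤ) + 1)) := by
    intro t
    simp only [hGp, Polynomial.eval_mul, Polynomial.eval_C, Polynomial.eval_prod]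
    congr 1
    refine Finset.prod_congr rfl fun k _ => ?_
    split <;> simp
  -- degree bound
  have hDeg : Gp.natDegree < Q := by
    have h1 : Gp.natDegree ≤ (∏ k ∈ Finset.Ico 1 Q, (if X (k - 1) = X k then 1 else
        Polynomial.C 2 * Polynomial.X - Polynomial.C (2 * (P k : ℤ) + 1))).natDegree := by
      rw [hGp]; exact Polynomial.natDegree_C_mul_le _ _
    have h2 : (∏ k ∈ Finset.Ico 1 Q, (if X (k - 1) = X k then 1 else
        Polynomial.C 2 * Polynomial.X - Polynomial.C (2 * (P k : ℤ) + 1))).natDegree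
        ≤ ∑ k ∈ Finset.Ico 1 Q, 1 := by
      refine le_trans (Polynomial.natDegree_prod_le _ _) (Finset.sum_le_sum fun k _ => ?_)
      split
      · simp
      · refine le_trans (Polynomial.natDegree_sub_le _ _) ?_
        simp only [Polynomial.natDegree_C, max_le_iff]
        constructor
        · exact le_trans (Polynomial.natDegree_C_mul_le _ _) (by simp)
        · omega
    have h3 : ∑ k ∈ Finset.Ico 1 Q, 1 = Q - 1 := by
      rw [Finset.sum_const, smul_eq_mul, mul_one, Nat.card_Ico]
    omega
  -- positivity of x_j * Gp.eval i on interval j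
  have hPos : ∀ j < Q, ∀ i : ℕ, P j < i → i ≤ P (j + 1) → 0 < X j * Gp.eval (i : ℤ) := by
    intro j hj i hji hij
    set c : ℕ → ℤ := fun k => if X (k - 1) = X k then 1 else 2 * (i : ℤ) - (2 * (P k : ℤ) + 1)
      with hc
    have hsplit : (∏ k ∈ Finset.Ico 1 (j + 1), c k) * ∏ k ∈ Finset.Ico (j + 1) Q, c k
        = ∏ k ∈ Finset.Ico 1 Q, c k :=
      Finset.prod_Ico_consecutive _ (by omega) (by omega)
    have hpos1 : 0 < ∏ k ∈ Finset.Ico 1 (j + 1), c k := by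
      refine Finset.prod_pos fun k hk => ?_
      simp only [Finset.mem_Ico] at hk
      simp only [hc]
      split
      · norm_num
      · have : P k ≤ P j := hPmono (by omega)
        have : (P k : ℤ) < i := by exact_mod_cast lt_of_le_of_lt (Nat.cast_le.mpr this) (by exact_mod_cast hji)
        omega
    have hpos2 : 0 < X j * X (Q - 1) * ∏ k ∈ Finset.Ico (j + 1) Q, c k := by
      have hQ1 : Q = (Q - 1) + 1 := by omega
      rw [hQ1]
      refine telescope' X hXpm c j ?_ (Q - 1) (by omega)
      intro k hk
      simp only [hc]
      split
      · rename_i h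
        rw [h]
        rcases hXpm k with h' | h' <;> rw [h'] <;> norm_num
      · rename_i h
        have hik : i ≤ P k := le_trans hij (hPmono (by omega))
        have hik' : (i : ℤ) ≤ (P k : ℤ) := by exact_mod_cast hik
        have hcneg : 2 * (i : ℤ) - (2 * (P k : ℤ) + 1) < 0 := by omega
        rcases hXpm (k - 1) with h1 | h1 <;> rcases hXpm k with h2 | h2 <;>
          first
            | exact absurd (h1.trans h2.symm) h
            | (rw [h1, h2]; linarith [hcneg])
    rw [hEval]
    have : X j * (X (Q - 1) * ∏ k ∈ Finset.Ico 1 Q, c k)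
        = (∏ k ∈ Finset.Ico 1 (j + 1), c k) *
          (X j * X (Q - 1) * ∏ k ∈ Finset.Ico (j + 1) Q, c k) := by
      rw [← hsplit]; ring
    rw [this]
    exact mul_pos hpos1 hpos2
  -- the total sum vanishes
  have hTotal : ∑ j : Fin Q, ∑ i ∈ Finset.Ioc (p j.castSucc) (p j.succ),
      |s i| * (x j * Gp.eval (i : ℤ)) = 0 := by
    have hrw : ∀ j : Fin Q, ∀ i ∈ Finset.Ioc (p j.castSucc) (p j.succ),
        |s i| * (x j * Gp.eval (i : ℤ))
          = ∑ e ∈ Finset.range Q, Gp.coeff e * (x j * (|s i| * (i : ℤ) ^ e)) := by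
      intro j i _
      rw [Polynomial.eval_eq_sum_range' hDeg]
      rw [Finset.mul_sum, Finset.mul_sum]
      refine Finset.sum_congr rfl fun e _ => by ring
    calc ∑ j : Fin Q, ∑ i ∈ Finset.Ioc (p j.castSucc) (p j.succ),
          |s i| * (x j * Gp.eval (i : ℤ))
        = ∑ j : Fin Q, ∑ i ∈ Finset.Ioc (p j.castSucc) (p j.succ),
          ∑ e ∈ Finset.range Q, Gp.coeff e * (x j * (|s i| * (i : ℤ) ^ e)) := by
          refine Finset.sum_congr rfl fun j _ => Finset.sum_congr rfl fun i hi => hrw j i hi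
      _ = ∑ j : Fin Q, ∑ e ∈ Finset.range Q, ∑ i ∈ Finset.Ioc (p j.castSucc) (p j.succ),
          Gp.coeff e * (x j * (|s i| * (i : ℤ) ^ e)) := by
          refine Finset.sum_congr rfl fun j _ => Finset.sum_comm
      _ = ∑ e ∈ Finset.range Q, ∑ j : Fin Q, ∑ i ∈ Finset.Ioc (p j.castSucc) (p j.succ),
          Gp.coeff e * (x j * (|s i| * (i : ℤ) ^ e)) := Finset.sum_comm
      _ = ∑ e ∈ Finset.range Q, Gp.coeff e * ∑ j : Fin Q,
          x j * ∑ i ∈ Finset.Ioc (p j.castSucc) (p j.succ), |s i| * (i : ℤ) ^ e := by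
          refine Finset.sum_congr rfl fun e _ => ?_
          simp only [Finset.mul_sum]
      _ = 0 := by
          refine Finset.sum_eq_zero fun e he => ?_
          rw [Finset.mem_range] at he
          have := hmom ⟨e, he⟩
          simp only at this
          rw [this, mul_zero]
  -- all terms are nonnegative
  have hNonneg : ∀ j : Fin Q, ∀ i ∈ Finset.Ioc (p j.castSucc) (p j.succ),
      0 ≤ |s i| * (x j * Gp.eval (i : ℤ)) := by
    intro j i hi
    rw [Finset.mem_Ioc] at hi
    have hpos := hPos j.val j.isLt i (by rw [← hPcast]; exact hi.1) (by rw [← hPsucc]; exact hi.2)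
    rw [hXval j]
    exact mul_nonneg (abs_nonneg _) hpos.le
  -- extract: each inner sum is zero, then each term is zero
  have hInner : ∀ j : Fin Q, ∀ i ∈ Finset.Ioc (p j.castSucc) (p j.succ),
      |s i| * (x j * Gp.eval (i : ℤ)) = 0 := by
    have houter := (Finset.sum_eq_zero_iff_of_nonneg
      (fun j _ => Finset.sum_nonneg (hNonneg j))).mp hTotal
    intro j i hi
    exact (Finset.sum_eq_zero_iff_of_nonneg (hNonneg j)).mp
      (houter j (Finset.mem_univ j)) i hi
  -- find the interval containing i0
  obtain ⟨j, hjQ, hj1, hj2⟩ := exists_interval' P i0 Q (by omega) (by omega)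
  have hjF : (⟨j, hjQ⟩ : Fin Q).val = j := rfl
  have hmem : i0 ∈ Finset.Ioc (p (⟨j, hjQ⟩ : Fin Q).castSucc) (p (⟨j, hjQ⟩ : Fin Q).succ) := by
    rw [Finset.mem_Ioc, hPcast, hPsucc]
    exact ⟨hj1, hj2⟩
  have h0 := hInner ⟨j, hjQ⟩ i0 hmem
  have hpos := hPos j hjQ i0 hj1 hj2
  rw [hXval ⟨j, hjQ⟩] at h0
  have : |s i0| = 0 := by
    by_contra habs
    have : 0 < |s i0| := lt_of_le_of_ne (abs_nonneg _) (Ne.symm habs)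
    nlinarith
  exact abs_eq_zero.mp this
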